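/- The edge-labeled graph associated with a factorization ρ of length n-1 in S_{n} is a tree if and only if the total monodromy μ(ρ) is an n-cycle. -/

import Mathlib

open Equiv SimpleGraph

variable {n : ℕ}

/-- The graph of a list of permutations (edges = swaps occurring in the list). -/
def lg (l : List (Equiv.Perm (Fin n))) : SimpleGraph (Fin n) where
  Adj a b := a ≠ b ∧ Equiv.swap a b ∈ l
  symm := by constructor; rintro a b ⟨hab, h⟩; exact ⟨hab.symm, by rwa [Equiv.swap_comm]⟩
  loopless := by constructor; rintro a ⟨h, -⟩; exact h rfl

lemma lg_adj {l : List (Equiv.Perm (Fin n))} {a b : Fin n} :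
    (lg l).Adj a b ↔ a ≠ b ∧ Equiv.swap a b ∈ l := Iff.rfl

lemma swap_eq_sym2 {α : Type*} [DecidableEq α] {a b c d : α} (hab : a ≠ b)
    (h : Equiv.swap a b = Equiv.swap c d) : s(a, b) = s(c, d) := by
  have hb : Equiv.swap c d a = b := by rw [← h, Equiv.swap_apply_left]
  by_cases hac : a = c
  · subst hac
    rw [Equiv.swap_apply_left] at hb; subst hb; rfl
  by_cases had : a = d
  · subst had
    rw [Equiv.swap_apply_right] at hb; subst hb
    exact Sym2.eq_swap
  · rw [Equiv.swap_apply_of_ne_of_ne hac had] at hb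
    exact absurd hb hab

lemma sym2_eq_swap_eq {α : Type*} [DecidableEq α] {a b c d : α}
    (h : s(a, b) = s(c, d)) : Equiv.swap a b = Equiv.swap c d := by
  rcases Sym2.eq_iff.mp h with ⟨rfl, rfl⟩ | ⟨rfl, rfl⟩
  · rfl
  · exact Equiv.swap_comm _ _

lemma reach_apply {l : List (Equiv.Perm (Fin n))} (hl : ∀ τ ∈ l, τ.IsSwap) (a : Fin n) :
    (lg l).Reachable a (l.prod a) := by
  induction l with
  | nil =>
    rw [List.prod_nil]
    exact Reachable.refl a
  | cons τ t ih =>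
    have hle : lg t ≤ lg (τ :: t) := fun u v hadj =>
      ⟨hadj.1, List.mem_cons_of_mem _ hadj.2⟩
    have h1 : (lg (τ :: t)).Reachable a (t.prod a) :=
      (ih (fun τ' h => hl τ' (List.mem_cons_of_mem _ h))).mono hle
    refine h1.trans ?_
    obtain ⟨x, y, hxy, rfl⟩ := hl τ (List.mem_cons_self)
    rw [List.prod_cons]
    set z := t.prod a with hz
    have hmem : Equiv.swap x y ∈ Equiv.swap x y :: t := List.mem_cons_self
    have happ : (Equiv.swap x y * t.prod) a = Equiv.swap x y z := rfl
    rw [happ]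
    by_cases hzx : z = x
    · subst hzx
      rw [Equiv.swap_apply_left]
      exact SimpleGraph.Adj.reachable ⟨hxy, hmem⟩
    by_cases hzy : z = y
    · rw [hzy, Equiv.swap_apply_right]
      refine SimpleGraph.Adj.reachable ⟨hxy.symm, ?_⟩
      rw [Equiv.swap_comm y x]
      exact hmem
    · rw [Equiv.swap_apply_of_ne_of_ne hzx hzy]

lemma reach_pow {l : List (Equiv.Perm (Fin n))} (hl : ∀ τ ∈ l, τ.IsSwap) (k : ℕ) (a : Fin n) :
    (lg l).Reachable a ((l.prod ^ k) a) := by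
  induction k with
  | zero => rw [pow_zero]; exact Reachable.refl a
  | succ k ih =>
    have : (l.prod ^ (k + 1)) a = l.prod ((l.prod ^ k) a) := by
      rw [pow_succ', Equiv.Perm.mul_apply]
    rw [this]
    exact ih.trans (reach_apply hl _)

lemma sameCycle_reachable {l : List (Equiv.Perm (Fin n))} (hl : ∀ τ ∈ l, τ.IsSwap)
    {a b : Fin n} (h : l.prod.SameCycle a b) : (lg l).Reachable a b := by
  obtain ⟨k, -, hk⟩ := h.exists_pow_eq'
  exact hk ▸ reach_pow hl k a

lemma merge_sameCycle {p : Equiv.Perm (Fin n)} {x y : Fin n} (hxy : x ≠ y)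
    (h : ¬ p.SameCycle x y) : (p * Equiv.swap x y).SameCycle x y := by
  have hyper : y ∈ Function.periodicPts ⇑p := by
    refine ⟨orderOf p, orderOf_pos p, ?_⟩
    show (⇑p)^[orderOf p] y = y
    rw [Equiv.Perm.iterate_eq_pow, pow_orderOf_eq_one]
    rfl
  set s := Function.minimalPeriod ⇑p y with hs
  have hs0 : 0 < s := Function.minimalPeriod_pos_of_mem_periodicPts hyper
  have hpss : (p ^ s) y = y := by
    have h2 := Function.iterate_minimalPeriod (f := ⇑p) (x := y)
    rwa [Equiv.Perm.iterate_eq_pow] at h2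
  have key : ∀ k, 1 ≤ k → k ≤ s → ((p * Equiv.swap x y) ^ k) x = (p ^ k) y := by
    intro k hk1
    induction k, hk1 using Nat.le_induction with
    | base =>
      intro _
      rw [pow_one, pow_one, Equiv.Perm.mul_apply, Equiv.swap_apply_left]
    | succ k hk ih =>
      intro hks
      have hik := ih (le_trans (Nat.le_succ k) hks)
      have hky : (p ^ k) y ≠ y := by
        intro hE
        have hper : Function.IsPeriodicPt ⇑p k y := by
          show (⇑p)^[k] y = y
          rwa [Equiv.Perm.iterate_eq_pow]
        have := hper.minimalPeriod_le (by omega)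
        omega
      have hkx : (p ^ k) y ≠ x := by
        intro hE
        exact h (Equiv.Perm.SameCycle.symm ⟨(k : ℤ), by rw [zpow_natCast]; exact hE⟩)
      rw [pow_succ', Equiv.Perm.mul_apply, hik, Equiv.Perm.mul_apply,
        Equiv.swap_apply_of_ne_of_ne hkx hky, pow_succ', Equiv.Perm.mul_apply]
  have hfin : ((p * Equiv.swap x y) ^ s) x = y := by rw [key s hs0 le_rfl, hpss]
  exact ⟨(s : ℤ), by rw [zpow_natCast]; exact hfin⟩

lemma sameCycle_mul_of_sameCycle {p : Equiv.Perm (Fin n)} {x y : Fin n} (hxy : x ≠ y)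
    (h : ¬ p.SameCycle x y) {a b : Fin n} (hab : p.SameCycle a b) :
    (p * Equiv.swap x y).SameCycle a b := by
  set σ := p * Equiv.swap x y with hσ
  have hstep : ∀ z : Fin n, σ.SameCycle z (p z) := by
    intro z
    by_cases hzx : z = x
    · subst hzx
      have h1 : σ y = p z := by
        rw [hσ, Equiv.Perm.mul_apply, Equiv.swap_apply_right]
      exact (merge_sameCycle hxy h).trans ⟨1, by rw [zpow_one]; exact h1⟩
    by_cases hzy : z = y
    · subst hzy
      have h1 : σ x = p z := by
        rw [hσ, Equiv.Perm.mul_apply, Equiv.swap_apply_left]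
      exact ((merge_sameCycle hxy h).symm).trans ⟨1, by rw [zpow_one]; exact h1⟩
    · refine ⟨1, ?_⟩
      rw [zpow_one, hσ, Equiv.Perm.mul_apply, Equiv.swap_apply_of_ne_of_ne hzx hzy]
  have hpow : ∀ m : ℕ, σ.SameCycle a ((p ^ m) a) := by
    intro m
    induction m with
    | zero => rw [pow_zero]; exact Equiv.Perm.SameCycle.refl σ a
    | succ m ih =>
      have := ih.trans (hstep ((p ^ m) a))
      rwa [← Equiv.Perm.mul_apply, ← pow_succ'] at this
  obtain ⟨k, -, hk⟩ := hab.exists_pow_eq'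
  exact hk ▸ hpow k

lemma reach_split {V : Type*} {G G' : SimpleGraph V} {x y : V}
    (H : ∀ u v, G.Adj u v → G'.Adj u v ∨ s(u, v) = s(x, y)) {a b : V}
    (w : G.Walk a b) :
    G'.Reachable a b ∨ ((G'.Reachable a x ∨ G'.Reachable a y) ∧
      (G'.Reachable b x ∨ G'.Reachable b y)) := by
  induction w with
  | nil => exact Or.inl (Reachable.refl _)
  | @cons u c d hadj w ih =>
    rcases H _ _ hadj with h' | hsym
    · rcases ih with h1 | ⟨h1, h2⟩
      · exact Or.inl (h'.reachable.trans h1)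
      · rcases h1 with h1 | h1
        · exact Or.inr ⟨Or.inl (h'.reachable.trans h1), h2⟩
        · exact Or.inr ⟨Or.inr (h'.reachable.trans h1), h2⟩
    · have hmem : (u = x ∧ c = y) ∨ (u = y ∧ c = x) := Sym2.eq_iff.mp hsym
      have hu : G'.Reachable u x ∨ G'.Reachable u y := by
        rcases hmem with ⟨rfl, -⟩ | ⟨rfl, -⟩
        · exact Or.inl (Reachable.refl _)
        · exact Or.inr (Reachable.refl _)
      have hc : G'.Reachable c x ∨ G'.Reachable c y := by
        rcases hmem with ⟨-, rfl⟩ | ⟨-, rfl⟩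
        · exact Or.inr (Reachable.refl _)
        · exact Or.inl (Reachable.refl _)
      rcases ih with h1 | ⟨-, h2⟩
      · refine Or.inr ⟨hu, ?_⟩
        rcases hc with hcc | hcc
        · exact Or.inl (h1.symm.trans hcc)
        · exact Or.inr (h1.symm.trans hcc)
      · exact Or.inr ⟨hu, h2⟩

lemma reach_collapse {V : Type*} {G G' : SimpleGraph V} {x y : V}
    (H : ∀ u v, G.Adj u v → G'.Adj u v ∨ s(u, v) = s(x, y)) (hxy : G'.Reachable x y)
    {a b : V} (hr : G.Reachable a b) : G'.Reachable a b := by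
  obtain ⟨w⟩ := hr
  rcases reach_split H w with h | ⟨h1, h2⟩
  · exact h
  · have h1' : G'.Reachable a x := by
      rcases h1 with h | h
      · exact h
      · exact h.trans hxy.symm
    have h2' : G'.Reachable b x := by
      rcases h2 with h | h
      · exact h
      · exact h.trans hxy.symm
    exact h1'.trans h2'.symm

lemma lg_nil_reachable {a b : Fin n}
    (h : (lg ([] : List (Equiv.Perm (Fin n)))).Reachable a b) : a = b := by
  obtain ⟨w⟩ := h
  cases w with
  | nil => rfl
  | cons hadj _ => exact absurd hadj.2 (List.not_mem_nil)

lemma card_components (l : List (Equiv.Perm (Fin n))) :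
    n ≤ Nat.card (lg l).ConnectedComponent + l.length := by
  induction l using List.reverseRecOn with
  | nil =>
    have hb : Function.Bijective
        ((lg ([] : List (Equiv.Perm (Fin n)))).connectedComponentMk) := by
      constructor
      · intro a b hE
        exact lg_nil_reachable (SimpleGraph.ConnectedComponent.exact hE)
      · intro c
        obtain ⟨v, hv⟩ := c.exists_rep
        exact ⟨v, hv⟩
    have hcard := Nat.card_eq_of_bijective _ hb
    rw [Nat.card_eq_fintype_card, Fintype.card_fin] at hcard
    simp only [List.length_nil, add_zero]
    omega
  | append_singleton t τ ih =>
    by_cases hτ : τ.IsSwap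
    · obtain ⟨x, y, hxy, rfl⟩ := hτ
      have hle : lg t ≤ lg (t ++ [Equiv.swap x y]) := fun u v hadj =>
        ⟨hadj.1, List.mem_append_left _ hadj.2⟩
      have H : ∀ u v, (lg (t ++ [Equiv.swap x y])).Adj u v →
          (lg t).Adj u v ∨ s(u, v) = s(x, y) := by
        rintro u v ⟨h1, h2⟩
        rcases List.mem_append.mp h2 with hm | hm
        · exact Or.inl ⟨h1, hm⟩
        · rw [List.mem_singleton] at hm
          exact Or.inr (swap_eq_sym2 h1 hm)
      classical
      set Gs := lg t
      set Gb := lg (t ++ [Equiv.swap x y])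
      let F : Gs.ConnectedComponent → Gb.ConnectedComponent :=
        SimpleGraph.ConnectedComponent.map (SimpleGraph.Hom.ofLE hle)
      let f : Gs.ConnectedComponent → Option Gb.ConnectedComponent :=
        fun K => if K = Gs.connectedComponentMk y then none else some (F K)
      have hinj : Function.Injective f := by
        intro K1 K2 hE
        by_cases h1 : K1 = Gs.connectedComponentMk y <;>
          by_cases h2 : K2 = Gs.connectedComponentMk y
        · rw [h1, h2]
        · simp only [f, if_pos h1, if_neg h2] at hE; exact absurd hE.symm (Option.some_ne_none _)
        · simp only [f, if_neg h1, if_pos h2] at hE; exact absurd hE (Option.some_ne_none _)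
        · simp only [f, if_neg h1, if_neg h2, Option.some_inj] at hE
          obtain ⟨a1, rfl⟩ := K1.exists_rep
          obtain ⟨a2, rfl⟩ := K2.exists_rep
          have hF : Gb.connectedComponentMk a1 = Gb.connectedComponentMk a2 := by
            exact hE
          obtain ⟨w⟩ := SimpleGraph.ConnectedComponent.exact hF
          rcases reach_split H w with hgood | ⟨ha1, ha2⟩
          · exact SimpleGraph.ConnectedComponent.sound hgood
          · have e1 : Gs.Reachable a1 x := by
              rcases ha1 with hh | hh
              · exact hh
              · exact absurd (SimpleGraph.ConnectedComponent.sound hh) h1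
            have e2 : Gs.Reachable a2 x := by
              rcases ha2 with hh | hh
              · exact hh
              · exact absurd (SimpleGraph.ConnectedComponent.sound hh) h2
            exact SimpleGraph.ConnectedComponent.sound (e1.trans e2.symm)
      have hcard := Nat.card_le_card_of_injective f hinj
      have hopt : Nat.card (Option Gb.ConnectedComponent) =
          Nat.card Gb.ConnectedComponent + 1 := by
        letI : Fintype Gb.ConnectedComponent := Fintype.ofFinite _
        rw [Nat.card_eq_fintype_card, Nat.card_eq_fintype_card, Fintype.card_option]
      rw [List.length_append, List.length_singleton]
      omega
    · have hEq : lg (t ++ [τ]) = lg t := by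
        ext u v
        simp only [lg_adj, List.mem_append, List.mem_singleton]
        constructor
        · rintro ⟨h1, h2 | h2⟩
          · exact ⟨h1, h2⟩
          · exact absurd ⟨u, v, h1, h2.symm⟩ hτ
        · rintro ⟨h1, h2⟩
          exact ⟨h1, Or.inl h2⟩
      rw [hEq, List.length_append, List.length_singleton]
      omega

lemma forest_sameCycle (l : List (Equiv.Perm (Fin n))) (hsw : ∀ τ ∈ l, τ.IsSwap)
    (hnd : l.Nodup) (hac : (lg l).IsAcyclic) {a b : Fin n}
    (hr : (lg l).Reachable a b) : l.prod.SameCycle a b := by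
  induction l using List.reverseRecOn generalizing a b with
  | nil =>
    rw [lg_nil_reachable hr]
  | append_singleton t τ ih =>
    obtain ⟨x, y, hxy, rfl⟩ := hsw τ (List.mem_append_right _ (List.mem_singleton_self _))
    have hswt : ∀ τ' ∈ t, τ'.IsSwap := fun τ' h => hsw τ' (List.mem_append_left _ h)
    obtain ⟨hndt, -, hdisj⟩ := List.nodup_append'.mp hnd
    have hτt : Equiv.swap x y ∉ t := fun hmem => hdisj hmem (List.mem_singleton_self _)
    have hle : lg t ≤ lg (t ++ [Equiv.swap x y]) := fun u v hadj =>
      ⟨hadj.1, List.mem_append_left _ hadj.2⟩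
    have hadjxy : (lg (t ++ [Equiv.swap x y])).Adj x y :=
      ⟨hxy, List.mem_append_right _ (List.mem_singleton_self _)⟩
    have hbridge := (SimpleGraph.isAcyclic_iff_forall_adj_isBridge.mp hac) hadjxy
    have hnr := SimpleGraph.isBridge_iff.mp hbridge
    have hles : lg t ≤ lg (t ++ [Equiv.swap x y]) \ SimpleGraph.fromEdgeSet {s(x, y)} := by
      rintro u v ⟨h1, h2⟩
      rw [SimpleGraph.sdiff_adj]
      refine ⟨⟨h1, List.mem_append_left _ h2⟩, ?_⟩
      rw [SimpleGraph.fromEdgeSet_adj]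
      rintro ⟨hmem2, -⟩
      rw [Set.mem_singleton_iff] at hmem2
      exact hτt ((sym2_eq_swap_eq hmem2) ▸ h2)
    have hnrt : ¬ (lg t).Reachable x y := fun hh => hnr (hh.mono hles)
    have hsct : ¬ t.prod.SameCycle x y := fun hh => hnrt (sameCycle_reachable hswt hh)
    have hact : (lg t).IsAcyclic := by
      intro v c hc
      exact hac (c.mapLe hle) (hc.mapLe hle)
    have IH : ∀ {a b : Fin n}, (lg t).Reachable a b → t.prod.SameCycle a b :=
      fun hh => ih hswt hndt hact hh
    have H : ∀ u v, (lg (t ++ [Equiv.swap x y])).Adj u v →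
        (lg t).Adj u v ∨ s(u, v) = s(x, y) := by
      rintro u v ⟨h1, h2⟩
      rcases List.mem_append.mp h2 with hm | hm
      · exact Or.inl ⟨h1, hm⟩
      · rw [List.mem_singleton] at hm
        exact Or.inr (swap_eq_sym2 h1 hm)
    rw [List.prod_append, List.prod_singleton]
    obtain ⟨w⟩ := hr
    have hmerge := merge_sameCycle hxy hsct
    rcases reach_split H w with hgood | ⟨h1, h2⟩
    · exact sameCycle_mul_of_sameCycle hxy hsct (IH hgood)
    · have g1 : (t.prod * Equiv.swap x y).SameCycle a x := by
        rcases h1 with hh | hh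
        · exact sameCycle_mul_of_sameCycle hxy hsct (IH hh)
        · exact (sameCycle_mul_of_sameCycle hxy hsct (IH hh)).trans hmerge.symm
      have g2 : (t.prod * Equiv.swap x y).SameCycle b x := by
        rcases h2 with hh | hh
        · exact sameCycle_mul_of_sameCycle hxy hsct (IH hh)
        · exact (sameCycle_mul_of_sameCycle hxy hsct (IH hh)).trans hmerge.symm
      exact g1.trans g2.symm


/-- The graph associated to a factorization `ρ` of transpositions: vertices are the `n`
points, and two distinct points are adjacent iff some factor of `ρ` is the transposition
swapping them. -/
def factGraph {n m : ℕ} (ρ : Fin m → Equiv.Perm (Fin n)) : SimpleGraph (Fin n) where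
  Adj a b := a ≠ b ∧ ∃ i, ρ i = Equiv.swap a b
  symm := by
    constructor; rintro a b ⟨hab, i, hi⟩
    exact ⟨hab.symm, i, by rw [hi, Equiv.swap_comm]⟩
  loopless := by constructor; rintro a ⟨h, -⟩; exact h rfl

/-- The graph associated with a factorization `ρ` of length `n - 1` in
`S_n` is a tree if and only if the total monodromy `μ(ρ) = τ_1 ⋯ τ_n-1` is an `n`-cycle
(i.e. the cyclic group it generates acts transitively on the `n` points). -/
theorem factGraph_isTree_iff_cycle {n : ℕ} (hn : 0 < n)
    (ρ : Fin (n - 1) → Equiv.Perm (Fin n)) (hρ : ∀ i, (ρ i).IsSwap) :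
    (factGraph ρ).IsTree ↔
      ∀ a b : Fin n, ∃ k : ℕ, ((List.ofFn ρ).prod ^ k) a = b := by
  classical
  have hG : factGraph ρ = lg (List.ofFn ρ) := by
    ext a b
    constructor
    · rintro ⟨h1, i, h2⟩
      exact ⟨h1, (List.mem_ofFn).mpr ⟨i, h2⟩⟩
    · rintro ⟨h1, h2⟩
      obtain ⟨i, hi⟩ := (List.mem_ofFn).mp h2
      exact ⟨h1, i, hi⟩
  have hsw : ∀ τ ∈ List.ofFn ρ, τ.IsSwap := by
    intro τ hτ
    obtain ⟨i, rfl⟩ := (List.mem_ofFn).mp hτ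
    exact hρ i
  have hlen : (List.ofFn ρ).length = n - 1 := List.length_ofFn
  constructor
  · intro hT
    letI : Fintype (factGraph ρ).edgeSet := Fintype.ofFinite _
    have hcard : (factGraph ρ).edgeFinset.card + 1 = n := by
      have hc := hT.card_edgeFinset
      rwa [Fintype.card_fin] at hc
    choose A B h1 h2 using hρ
    have hinj : Function.Injective ρ := by
      let g : Fin (n - 1) → ((factGraph ρ).edgeFinset : Finset (Sym2 (Fin n))) := fun i =>
        ⟨s(A i, B i), by
          rw [SimpleGraph.mem_edgeFinset, SimpleGraph.mem_edgeSet]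
          exact ⟨h1 i, i, h2 i⟩⟩
      have hgsurj : Function.Surjective g := by
        rintro ⟨e, he⟩
        induction e using Sym2.ind with
        | _ u v =>
          rw [SimpleGraph.mem_edgeFinset, SimpleGraph.mem_edgeSet] at he
          obtain ⟨hne, i, hi⟩ := he
          refine ⟨i, Subtype.ext ?_⟩
          exact swap_eq_sym2 (h1 i) ((h2 i).symm.trans hi)
      have hgbij : Function.Bijective g := by
        rw [Fintype.bijective_iff_surjective_and_card]
        refine ⟨hgsurj, ?_⟩
        rw [Fintype.card_fin, Fintype.card_coe]
        omega
      intro i j hij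
      have hg : g i = g j := by
        apply Subtype.ext
        show s(A i, B i) = s(A j, B j)
        exact swap_eq_sym2 (h1 i) ((h2 i).symm.trans (hij.trans (h2 j)))
      exact hgbij.1 hg
    have hnd : (List.ofFn ρ).Nodup := List.nodup_ofFn.mpr hinj
    intro a b
    have hre : (factGraph ρ).Reachable a b := hT.isConnected.preconnected a b
    rw [hG] at hre
    have hacyc : (lg (List.ofFn ρ)).IsAcyclic := hG ▸ hT.IsAcyclic
    have hsc := forest_sameCycle _ hsw hnd hacyc hre
    obtain ⟨k, -, hk⟩ := hsc.exists_pow_eq'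
    exact ⟨k, hk⟩
  · intro h
    have hreach : ∀ a b : Fin n, (lg (List.ofFn ρ)).Reachable a b := by
      intro a b
      obtain ⟨k, hk⟩ := h a b
      exact hk ▸ reach_pow hsw k a
    constructor
    · rw [hG, SimpleGraph.connected_iff]
      exact ⟨hreach, ⟨⟨0, hn⟩⟩⟩
    · rw [hG, SimpleGraph.isAcyclic_iff_forall_adj_isBridge]
      intro u v hadj
      rw [SimpleGraph.isBridge_iff]
      intro hre
      unfold SimpleGraph.deleteEdges at hre
      obtain ⟨hne, hmem⟩ := hadj
      have hn2 : 2 ≤ n := by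
        by_contra hlt
        have hn1 : n = 1 := by omega
        subst hn1
        exact hne (Subsingleton.elim u v)
      set l := List.ofFn ρ with hl
      set l'' := l.erase (Equiv.swap u v) with hl''
      have hlen'' : l''.length = n - 1 - 1 := by
        rw [hl'', List.length_erase_of_mem hmem, hlen]
      have hre'' : (lg l'').Reachable u v := by
        refine hre.mono ?_
        intro a b hab
        rw [SimpleGraph.sdiff_adj] at hab
        obtain ⟨⟨ha1, ha2⟩, ha3⟩ := hab
        refine ⟨ha1, ?_⟩
        have hne2 : Equiv.swap a b ≠ Equiv.swap u v := by
          intro hE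
          refine ha3 ?_
          rw [SimpleGraph.fromEdgeSet_adj]
          exact ⟨Set.mem_singleton_iff.mpr (swap_eq_sym2 ha1 hE), ha1⟩
        exact (List.mem_erase_of_ne hne2).mpr ha2
      have hconn'' : ∀ a b : Fin n, (lg l'').Reachable a b := by
        intro a b
        refine reach_collapse (x := u) (y := v) ?_ hre'' (hreach a b)
        rintro a' b' ⟨hh1, hh2⟩
        by_cases hE : Equiv.swap a' b' = Equiv.swap u v
        · exact Or.inr (swap_eq_sym2 hh1 hE)
        · exact Or.inl ⟨hh1, (List.mem_erase_of_ne hE).mpr hh2⟩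
      have hcc : Nat.card (lg l'').ConnectedComponent = 1 := by
        rw [Nat.card_eq_one_iff_unique]
        constructor
        · constructor
          intro c1 c2
          obtain ⟨a1, rfl⟩ := c1.exists_rep
          obtain ⟨a2, rfl⟩ := c2.exists_rep
          exact SimpleGraph.ConnectedComponent.sound (hconn'' a1 a2)
        · exact ⟨(lg l'').connectedComponentMk ⟨0, hn⟩⟩
      have hcomp := card_components l''
      rw [hcc, hlen''] at hcomp
      omega
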